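/- Let Φ : ℝ → ℝ denote the cumulative distribution function of the standard Gaussian measure on ℝ, and let γ_{m,v} denote the Gaussian measure on ℝ with mean m ∈ ℝ and variance v > 0. Then for every λ > 0, ∫ Φ(λ·a) dγ_{m,v}(a) = Φ( λ·m / √(1 + λ²·v) ). (The probit–Gaussian convolution identity underlying the approximate predictive distribution in Eq. (3); with λ = √(π/8) it yields p(y=1|x,D) ≈ Φ( √(π/8)·μᵀφ / √(1 + (π/8)·φᵀΣφ) ).) -/

import Mathlib

open MeasureTheory ProbabilityTheory Real
open scoped NNReal ENNReal

private lemma key_pdf (m : ℝ) (v : ℝ≥0) (hv : 0 < v) (l : ℝ) (w a : ℝ) :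
    gaussianPDFReal 0 1 (w + l * a) * gaussianPDFReal m v a
      = gaussianPDFReal (-(l * m)) (1 + ⟨l ^ 2, sq_nonneg l⟩ * v) w
        * gaussianPDFReal ((m - l * v * w) / (1 + l ^ 2 * v))
            ⟨(v : ℝ) / (1 + l ^ 2 * v), by positivity⟩ a := by
  have hv' : (0:ℝ) < v := hv
  have hV : (0:ℝ) < 1 + l ^ 2 * v := by positivity
  simp only [gaussianPDFReal, NNReal.coe_mk, NNReal.coe_add, NNReal.coe_mul, NNReal.coe_one]
  change _ = (√(2 * π * (1 + l ^ 2 * (v:ℝ))))⁻¹ * rexp (-(w - -(l * m)) ^ 2 / (2 * (1 + l ^ 2 * (v:ℝ)))) *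
      ((√(2 * π * ((v:ℝ) / (1 + l ^ 2 * v))))⁻¹ *
        rexp (-(a - (m - l * ↑v * w) / (1 + l ^ 2 * ↑v)) ^ 2 / (2 * ((v:ℝ) / (1 + l ^ 2 * v)))))
  rw [mul_mul_mul_comm, mul_mul_mul_comm (√(2 * π * (1 + l^2 * (v:ℝ))))⁻¹, ← Real.exp_add,
    ← Real.exp_add, ← Real.sqrt_inv, ← Real.sqrt_inv, ← Real.sqrt_mul (by positivity),
    ← Real.sqrt_inv, ← Real.sqrt_inv, ← Real.sqrt_mul (by positivity)]
  congr 2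
  · field_simp
  · field_simp
    ring


/-- The cumulative distribution function of the standard Gaussian measure. -/
noncomputable def stdGaussianCDF (t : ℝ) : ℝ :=
  ((gaussianReal 0 1) (Set.Iic t)).toReal

/-- The probit–Gaussian convolution identity (Eq. (3)): for every `λ > 0`,
`∫ Φ(λ·a) dγ_{m,v}(a) = Φ(λ·m / √(1 + λ²·v))`, where `γ_{m,v}` is the
Gaussian measure with mean `m` and variance `v > 0`. -/
theorem integral_stdGaussianCDF_gaussianReal (m : ℝ) (v : NNReal) (hv : 0 < v)
    (l : ℝ) (hl : 0 < l) :
    ∫ a, stdGaussianCDF (l * a) ∂(gaussianReal m v) =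
      stdGaussianCDF (l * m / Real.sqrt (1 + l ^ 2 * (v : ℝ))) := by
  have hv0 : v ≠ 0 := hv.ne'
  have hv' : (0:ℝ) < v := hv
  have hV : (0:ℝ) < 1 + l ^ 2 * (v:ℝ) := by positivity
  set Vn : ℝ≥0 := 1 + ⟨l ^ 2, sq_nonneg l⟩ * v with hVn_def
  have hVn_coe : (Vn : ℝ) = 1 + l ^ 2 * v := by simp [hVn_def]; rfl
  have hVn0 : Vn ≠ 0 := by
    rw [← NNReal.coe_ne_zero, hVn_coe]; positivity
  set v' : ℝ≥0 := ⟨(v:ℝ) / (1 + l ^ 2 * v), by positivity⟩ with hv'_def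
  have hv'0 : v' ≠ 0 := by
    rw [← NNReal.coe_ne_zero]
    simp only [hv'_def, NNReal.coe_mk]
    exact (div_pos hv' hV).ne'
  have hmono : Monotone stdGaussianCDF := by
    intro s t hst
    exact (ENNReal.toReal_le_toReal (measure_ne_top _ _) (measure_ne_top _ _)).mpr
      (measure_mono (Set.Iic_subset_Iic.mpr hst))
  have hmeas : Measurable stdGaussianCDF := hmono.measurable
  -- to lintegral
  have hnn : 0 ≤ᵐ[gaussianReal m v] fun a => stdGaussianCDF (l * a) :=
    ae_of_all _ fun a => ENNReal.toReal_nonneg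
  rw [integral_eq_lintegral_of_nonneg_ae hnn
    ((hmeas.comp (measurable_const_mul l) : Measurable fun a : ℝ => stdGaussianCDF (l * a)).aestronglyMeasurable)]
  have hofReal : ∀ t : ℝ, ENNReal.ofReal (stdGaussianCDF t) = (gaussianReal 0 1) (Set.Iic t) :=
    fun t => ENNReal.ofReal_toReal (measure_ne_top _ _)
  simp_rw [hofReal]
  -- the main lintegral computation
  have hfin : ∫⁻ a, (gaussianReal 0 1) (Set.Iic (l * a)) ∂(gaussianReal m v)
      = (gaussianReal (-(l * m)) Vn) (Set.Iic 0) := by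
    have hg : Measurable fun a : ℝ => (gaussianReal 0 1) (Set.Iic (l * a)) := by
      have : Monotone fun t : ℝ => (gaussianReal 0 1) (Set.Iic t) :=
        fun s t hst => measure_mono (Set.Iic_subset_Iic.mpr hst)
      exact this.measurable.comp (measurable_const_mul l)
    rw [gaussianReal_of_var_ne_zero m hv0,
      lintegral_withDensity_eq_lintegral_mul _ (measurable_gaussianPDF m v) hg]
    have h3 : ∀ a : ℝ, (gaussianReal 0 1) (Set.Iic (l * a))
        = ∫⁻ w in Set.Iic (0:ℝ), gaussianPDF 0 1 (w + l * a) := by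
      intro a
      rw [gaussianReal_of_var_ne_zero 0 one_ne_zero, withDensity_apply _ measurableSet_Iic,
        ← lintegral_indicator measurableSet_Iic,
        ← lintegral_add_right_eq_self (fun z => (Set.Iic (l*a)).indicator (gaussianPDF 0 1) z)
          (l * a), ← lintegral_indicator measurableSet_Iic]
      congr 1
      ext w
      by_cases hw : w ≤ 0 <;>
        simp [Set.indicator_apply, Set.mem_Iic, add_le_iff_nonpos_left, hw]
    simp_rw [Pi.mul_apply, h3]
    have hpull : ∀ a : ℝ, gaussianPDF m v a * ∫⁻ w in Set.Iic (0:ℝ), gaussianPDF 0 1 (w + l * a)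
        = ∫⁻ w in Set.Iic (0:ℝ), gaussianPDF 0 1 (w + l * a) * gaussianPDF m v a := by
      intro a
      have hfm : Measurable fun w : ℝ => gaussianPDF 0 1 (w + l * a) :=
        ((measurable_gaussianPDF 0 1).comp (measurable_add_const (l * a)) :)
      rw [lintegral_mul_const _ hfm]
      exact mul_comm _ _
    simp_rw [hpull]
    rw [lintegral_lintegral_swap]
    swap
    · exact (((measurable_gaussianPDF 0 1).comp
        (measurable_snd.add (measurable_fst.const_mul l))).mul
        ((measurable_gaussianPDF m v).comp measurable_fst)).aemeasurable
    have hinner : ∀ w : ℝ, ∫⁻ a, gaussianPDF 0 1 (w + l * a) * gaussianPDF m v a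
        = gaussianPDF (-(l * m)) Vn w := by
      intro w
      have : ∀ a : ℝ, gaussianPDF 0 1 (w + l * a) * gaussianPDF m v a
          = gaussianPDF (-(l * m)) Vn w * gaussianPDF ((m - l * v * w) / (1 + l ^ 2 * v)) v' a := by
        intro a
        simp only [gaussianPDF, ← ENNReal.ofReal_mul (gaussianPDFReal_nonneg 0 1 _),
          ← ENNReal.ofReal_mul (gaussianPDFReal_nonneg _ _ _)]
        rw [key_pdf m v hv l w a]
      simp_rw [this]
      rw [lintegral_const_mul _ (measurable_gaussianPDF _ _),
        lintegral_gaussianPDF_eq_one _ hv'0, mul_one]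
    simp_rw [hinner]
    rw [gaussianReal_of_var_ne_zero _ hVn0, withDensity_apply _ measurableSet_Iic]
  rw [hfin]
  -- identify the resulting Gaussian measure of Iic 0
  have hσ : (0:ℝ) < Real.sqrt (1 + l ^ 2 * v) := Real.sqrt_pos.mpr hV
  have hmap1 : (gaussianReal 0 1).map (Real.sqrt (1 + l ^ 2 * (v:ℝ)) * ·) = gaussianReal 0 Vn := by
    rw [gaussianReal_map_const_mul]
    congr 1
    · ring
    · ext
      simp [hVn_coe, Real.sq_sqrt hV.le]
  have hmap2 : (gaussianReal 0 Vn).map (· + -(l * m)) = gaussianReal (-(l * m)) Vn := by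
    simpa using gaussianReal_map_add_const (μ := 0) (v := Vn) (-(l * m))
  rw [← hmap2, ← hmap1, Measure.map_apply (measurable_add_const _) measurableSet_Iic,
    Set.preimage_add_const_Iic,
    Measure.map_apply (measurable_const_mul _) measurableSet_Iic,
    Set.preimage_const_mul_Iic₀ _ hσ]
  rw [stdGaussianCDF]
  norm_num
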